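/- Under Assumption 1, if X_min ≥ 0 is the minimal nonnegative solution of R_T(X) = 0 and there exists Ȳ with R_T(Ȳ) > 0 entrywise, then the matrix I⊗(D − X_minᵀB) + ((A − B X_min)ᵀ⊗I)Π is a nonsingular M-matrix. -/

import Mathlib

open Matrix

/-- A real square matrix is a Z-matrix if all its off-diagonal entries are nonpositive. -/
def IsZMatrix {m : Type*} [Fintype m] [DecidableEq m] (A : Matrix m m ℝ) : Prop :=
  ∀ i j, i ≠ j → A i j ≤ 0

/-- A real square matrix is a nonsingular M-matrix if it can be written as `s • 1 - N`
with `N` entrywise nonnegative and `s` strictly larger than the spectral radius of `N`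
(i.e., every complex eigenvalue of `N` has modulus strictly less than `s`). -/
def IsNonsingMMatrix {m : Type*} [Fintype m] [DecidableEq m] (A : Matrix m m ℝ) : Prop :=
  ∃ (s : ℝ) (N : Matrix m m ℝ),
    0 < s ∧ (∀ i j, 0 ≤ N i j) ∧ A = s • (1 : Matrix m m ℝ) - N ∧
    ∀ μ ∈ spectrum ℂ (N.map (algebraMap ℝ ℂ)), ‖μ‖ < s

open Kronecker

/-- The vec-permutation matrix `Π = Σ_{i,j} E_{i,j} ⊗ E_{j,i}`, where `E_{i,j}` is the
matrix with `(i,j)` entry `1` and zeros elsewhere. -/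
def vecPerm (n : ℕ) : Matrix (Fin n × Fin n) (Fin n × Fin n) ℝ :=
  ∑ i : Fin n, ∑ j : Fin n,
    (Matrix.single i j (1 : ℝ)) ⊗ₖ (Matrix.single j i (1 : ℝ))

/-- Column-stacking vectorization: `vecM X (j, i) = X i j`. -/
def vecM {n : ℕ} (X : Matrix (Fin n) (Fin n) ℝ) : Fin n × Fin n → ℝ := fun p => X p.2 p.1


lemma key_eig {m : Type*} [Fintype m] [DecidableEq m] (s : ℝ) (N : Matrix m m ℝ)
    (hs : 0 < s) (hN : ∀ i j, 0 ≤ N i j) (v : m → ℝ) (hv : ∀ i, 0 ≤ v i)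
    (hlt : ∀ i, (N.mulVec v) i < s * v i) :
    ∀ μ ∈ spectrum ℂ (N.map (algebraMap ℝ ℂ)), ‖μ‖ < s := by
  intro μ hμ
  have hvpos : ∀ i, 0 < v i := by
    intro i
    have h0 : 0 ≤ (N.mulVec v) i := Finset.sum_nonneg fun j _ =>
      mul_nonneg (hN i j) (hv j)
    nlinarith [hlt i]
  rw [spectrum.mem_iff] at hμ
  have hdet : ((algebraMap ℂ (Matrix m m ℂ)) μ - N.map (algebraMap ℝ ℂ)).det = 0 := by
    by_contra h
    exact hμ ((Matrix.isUnit_iff_isUnit_det _).mpr (isUnit_iff_ne_zero.mpr h))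
  obtain ⟨u, hu0, hu⟩ := (Matrix.exists_mulVec_eq_zero_iff).mpr hdet
  have heig : ∀ i, ((N.map (algebraMap ℝ ℂ)).mulVec u) i = μ * u i := by
    intro i
    have h1 := congrFun hu i
    rw [Algebra.algebraMap_eq_smul_one] at h1
    simp [Matrix.sub_mulVec, Matrix.smul_mulVec, Matrix.one_mulVec,
      sub_eq_zero] at h1
    exact h1.symm
  have hne : Nonempty m := by
    by_contra h
    exact hu0 (funext fun i => absurd ⟨i⟩ h)
  obtain ⟨i0, -, hmax⟩ := Finset.exists_max_image Finset.univ
    (fun i => ‖u i‖ / v i) ⟨Classical.arbitrary m, Finset.mem_univ _⟩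
  set t := ‖u i0‖ / v i0 with ht
  have hbound : ∀ j, ‖u j‖ ≤ t * v j := by
    intro j
    calc ‖u j‖ = ‖u j‖ / v j * v j :=
          (div_mul_cancel₀ _ (hvpos j).ne').symm
      _ ≤ t * v j :=
          mul_le_mul_of_nonneg_right (hmax j (Finset.mem_univ j)) (hvpos j).le
  have htpos : 0 < t := by
    rcases Function.ne_iff.mp hu0 with ⟨j, hj⟩
    have h1 : 0 < ‖u j‖ := norm_pos_iff.mpr hj
    have := hbound j
    have := hvpos j
    rcases lt_or_ge 0 t with h | h
    · exact h
    · nlinarith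
  have hti0 : ‖u i0‖ = t * v i0 := by
    rw [ht, div_mul_cancel₀ _ (hvpos i0).ne']
  have hstep : ‖μ‖ * (t * v i0) ≤ t * (N.mulVec v) i0 := by
    rw [← hti0, ← norm_mul μ (u i0), ← heig i0]
    calc ‖(N.map (algebraMap ℝ ℂ)).mulVec u i0‖
        ≤ ∑ j, ‖(N.map (algebraMap ℝ ℂ)) i0 j * u j‖ := by
          exact norm_sum_le _ _
      _ ≤ ∑ j, N i0 j * (t * v j) := by
          apply Finset.sum_le_sum
          intro j _
          rw [norm_mul]
          simp only [Matrix.map_apply]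
          rw [show ‖(algebraMap ℝ ℂ) (N i0 j)‖ = N i0 j by
            simp [Complex.norm_real, abs_of_nonneg (hN i0 j)]]
          exact mul_le_mul_of_nonneg_left (hbound j) (hN i0 j)
      _ = t * (N.mulVec v) i0 := by
          rw [Matrix.mulVec, dotProduct, Finset.mul_sum]
          congr 1; funext j; ring
  have hfin : ‖μ‖ * (t * v i0) < s * (t * v i0) := by
    refine lt_of_le_of_lt hstep ?_
    have := hlt i0
    nlinarith
  have hpos : 0 < t * v i0 := mul_pos htpos (hvpos i0)
  exact lt_of_mul_lt_mul_right hfin hpos.le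

lemma vecPerm_apply {n : ℕ} (a b c d : Fin n) :
    vecPerm n (a, b) (c, d) = if a = d ∧ b = c then 1 else 0 := by
  simp only [vecPerm, Finset.sum_apply, Matrix.sum_apply, kroneckerMap_apply,
    Matrix.single, Matrix.of_apply]
  rw [Finset.sum_comm]
  simp [Finset.sum_ite_eq, ite_and, mul_ite]
  aesop

lemma one_kron_mulVec {n : ℕ} (E X : Matrix (Fin n) (Fin n) ℝ) :
    ((1 : Matrix (Fin n) (Fin n) ℝ) ⊗ₖ E).mulVec (vecM X) = vecM (E * X) := by
  funext p
  obtain ⟨j, i⟩ := p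
  simp only [Matrix.mulVec, dotProduct, Fintype.sum_prod_type, kroneckerMap_apply,
    Matrix.one_apply, vecM, Matrix.mul_apply, ite_mul, one_mul, zero_mul]
  rw [Finset.sum_comm]
  simp [Finset.sum_ite_eq']

lemma vecPerm_mulVec {n : ℕ} (X : Matrix (Fin n) (Fin n) ℝ) :
    (vecPerm n).mulVec (vecM X) = vecM Xᵀ := by
  funext p
  obtain ⟨a, b⟩ := p
  simp only [Matrix.mulVec, dotProduct, Fintype.sum_prod_type, vecPerm_apply, vecM,
    Matrix.transpose_apply, ite_mul, one_mul, zero_mul, ite_and]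
  simp [Finset.sum_ite_eq, Finset.sum_ite_eq']

lemma kron_one_mulVec {n : ℕ} (F Y : Matrix (Fin n) (Fin n) ℝ) :
    (Fᵀ ⊗ₖ (1 : Matrix (Fin n) (Fin n) ℝ)).mulVec (vecM Y) = vecM (Y * F) := by
  funext p
  obtain ⟨j, i⟩ := p
  simp only [Matrix.mulVec, dotProduct, Fintype.sum_prod_type, kroneckerMap_apply,
    Matrix.one_apply, vecM, Matrix.mul_apply, Matrix.transpose_apply, mul_ite,
    mul_one, mul_zero, ite_mul, zero_mul]
  simp [Finset.sum_ite_eq', mul_comm]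

lemma one_kron_sub {n : ℕ} (D E : Matrix (Fin n) (Fin n) ℝ) :
    (1 : Matrix (Fin n) (Fin n) ℝ) ⊗ₖ (D - E)
      = (1 : Matrix (Fin n) (Fin n) ℝ) ⊗ₖ D - (1 : Matrix (Fin n) (Fin n) ℝ) ⊗ₖ E := by
  ext ⟨a, b⟩ ⟨c, d⟩
  simp [kroneckerMap_apply, mul_sub]

lemma sub_kron_one {n : ℕ} (D E : Matrix (Fin n) (Fin n) ℝ) :
    (D - E) ⊗ₖ (1 : Matrix (Fin n) (Fin n) ℝ)
      = D ⊗ₖ (1 : Matrix (Fin n) (Fin n) ℝ) - E ⊗ₖ (1 : Matrix (Fin n) (Fin n) ℝ) := by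
  ext ⟨a, b⟩ ⟨c, d⟩
  simp [kroneckerMap_apply, sub_mul]

/-- Under Assumption 1, if `Xmin ≥ 0` is the minimal nonnegative solution of
`R_T(X) = 0` and there exists a (nonnegative) `Ȳ` with `R_T(Ȳ) > 0` entrywise, then
`I ⊗ (D − Xminᵀ B) + ((A − B Xmin)ᵀ ⊗ I) Π` is a nonsingular M-matrix. -/
theorem closedLoop_isNonsingMMatrix
    {n : ℕ} (A B C D Xmin : Matrix (Fin n) (Fin n) ℝ)
    (hB : ∀ i j, 0 ≤ B i j) (hC : ∀ i j, C i j ≤ 0)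
    (hM : IsNonsingMMatrix
      ((1 : Matrix (Fin n) (Fin n) ℝ) ⊗ₖ D
        + (Aᵀ ⊗ₖ (1 : Matrix (Fin n) (Fin n) ℝ)) * vecPerm n))
    (hXmin : ∀ i j, 0 ≤ Xmin i j)
    (hsol : D * Xmin + Xminᵀ * A - Xminᵀ * B * Xmin + C = 0)
    (hmin : ∀ Z : Matrix (Fin n) (Fin n) ℝ, (∀ i j, 0 ≤ Z i j) →
      (∀ i j, 0 ≤ (D * Z + Zᵀ * A - Zᵀ * B * Z + C) i j) →
      ∀ i j, Xmin i j ≤ Z i j)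
    (hY : ∃ Ybar : Matrix (Fin n) (Fin n) ℝ, (∀ i j, 0 ≤ Ybar i j) ∧
      ∀ i j, 0 < (D * Ybar + Ybarᵀ * A - Ybarᵀ * B * Ybar + C) i j) :
    IsNonsingMMatrix
      ((1 : Matrix (Fin n) (Fin n) ℝ) ⊗ₖ (D - Xminᵀ * B)
        + ((A - B * Xmin)ᵀ ⊗ₖ (1 : Matrix (Fin n) (Fin n) ℝ)) * vecPerm n) := by
  obtain ⟨s, N0, hs, hN0, hEq, hspec⟩ := hM
  obtain ⟨Y, hY0, hYpos⟩ := hY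
  -- P : the nonnegative perturbation
  set P : Matrix (Fin n × Fin n) (Fin n × Fin n) ℝ :=
    (1 : Matrix (Fin n) (Fin n) ℝ) ⊗ₖ (Xminᵀ * B)
      + ((B * Xmin)ᵀ ⊗ₖ (1 : Matrix (Fin n) (Fin n) ℝ)) * vecPerm n with hP
  have hXB : ∀ i j, 0 ≤ (Xminᵀ * B) i j := by
    intro i j
    rw [Matrix.mul_apply]
    exact Finset.sum_nonneg fun k _ =>
      mul_nonneg (by simpa using hXmin k i) (hB k j)
  have hBX : ∀ i j, 0 ≤ (B * Xmin) i j := by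
    intro i j
    rw [Matrix.mul_apply]
    exact Finset.sum_nonneg fun k _ => mul_nonneg (hB i k) (hXmin k j)
  have hone : ∀ (a c : Fin n), 0 ≤ (1 : Matrix (Fin n) (Fin n) ℝ) a c := by
    intro a c
    by_cases h : a = c <;> simp [Matrix.one_apply, h]
  have hPnn : ∀ p q, 0 ≤ P p q := by
    rintro ⟨a, b⟩ ⟨c, d⟩
    rw [hP]
    simp only [Matrix.add_apply, kroneckerMap_apply, Matrix.mul_apply]
    apply add_nonneg
    · exact mul_nonneg (hone a c) (hXB b d)
    · refine Finset.sum_nonneg fun q _ => mul_nonneg ?_ ?_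
      · simp only [kroneckerMap_apply, Matrix.transpose_apply]
        exact mul_nonneg (hBX q.1 a) (hone b q.2)
      · obtain ⟨c', d'⟩ := q
        rw [vecPerm_apply]
        positivity
  -- W = Y - Xmin is nonnegative by minimality
  have hWnn : ∀ i j, 0 ≤ (Y - Xmin) i j := by
    intro i j
    have := hmin Y hY0 (fun i j => (hYpos i j).le) i j
    simp [Matrix.sub_apply]
    linarith
  set W : Matrix (Fin n) (Fin n) ℝ := Y - Xmin with hW
  -- the key matrix identity
  have hkey : (D - Xminᵀ * B) * W + Wᵀ * (A - B * Xmin)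
      = (D * Y + Yᵀ * A - Yᵀ * B * Y + C) + Wᵀ * B * W := by
    rw [hW, ← sub_eq_zero]
    have : (D - Xminᵀ * B) * (Y - Xmin) + (Y - Xmin)ᵀ * (A - B * Xmin)
        - ((D * Y + Yᵀ * A - Yᵀ * B * Y + C) + (Y - Xmin)ᵀ * B * (Y - Xmin))
        = -(D * Xmin + Xminᵀ * A - Xminᵀ * B * Xmin + C) := by
      simp only [Matrix.transpose_sub]
      noncomm_ring
    rw [this, hsol, neg_zero]
  -- entrywise positivity of the right-hand side
  have hpos : ∀ i j, 0 < ((D - Xminᵀ * B) * W + Wᵀ * (A - B * Xmin)) i j := by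
    intro i j
    rw [hkey]
    have h1 : 0 ≤ (Wᵀ * B * W) i j := by
      rw [Matrix.mul_apply]
      refine Finset.sum_nonneg fun k _ => mul_nonneg ?_ (hWnn k j)
      rw [Matrix.mul_apply]
      exact Finset.sum_nonneg fun l _ =>
        mul_nonneg (by simpa [Matrix.transpose_apply] using hWnn l i) (hB l k)
    have h2 := hYpos i j
    simp only [Matrix.add_apply, Matrix.sub_apply] at h2 ⊢
    linarith
  -- the target matrix equals s • 1 - (N0 + P)
  have hTgt : (1 : Matrix (Fin n) (Fin n) ℝ) ⊗ₖ (D - Xminᵀ * B)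
        + ((A - B * Xmin)ᵀ ⊗ₖ (1 : Matrix (Fin n) (Fin n) ℝ)) * vecPerm n
      = s • (1 : Matrix (Fin n × Fin n) (Fin n × Fin n) ℝ) - (N0 + P) := by
    have h1 : (1 : Matrix (Fin n) (Fin n) ℝ) ⊗ₖ (D - Xminᵀ * B)
        + ((A - B * Xmin)ᵀ ⊗ₖ (1 : Matrix (Fin n) (Fin n) ℝ)) * vecPerm n
        = ((1 : Matrix (Fin n) (Fin n) ℝ) ⊗ₖ D
            + (Aᵀ ⊗ₖ (1 : Matrix (Fin n) (Fin n) ℝ)) * vecPerm n) - P := by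
      rw [one_kron_sub, transpose_sub, sub_kron_one, Matrix.sub_mul, hP]
      abel
    rw [h1, hEq]
    abel
  refine ⟨s, N0 + P, hs, fun p q => add_nonneg (hN0 p q) (hPnn p q), hTgt, ?_⟩
  -- apply the eigenvalue bound with v = vecM W
  apply key_eig s (N0 + P) hs (fun p q => add_nonneg (hN0 p q) (hPnn p q)) (vecM W)
  · rintro ⟨a, b⟩
    exact hWnn b a
  · intro p
    have hmv : ((s • (1 : Matrix (Fin n × Fin n) (Fin n × Fin n) ℝ) - (N0 + P)).mulVec
        (vecM W)) p = vecM ((D - Xminᵀ * B) * W + Wᵀ * (A - B * Xmin)) p := by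
      rw [← hTgt]
      rw [Matrix.add_mulVec, ← Matrix.mulVec_mulVec, vecPerm_mulVec, one_kron_mulVec,
        kron_one_mulVec]
      rfl
    have hp : 0 < vecM ((D - Xminᵀ * B) * W + Wᵀ * (A - B * Xmin)) p := hpos p.2 p.1
    rw [← hmv] at hp
    rw [Matrix.sub_mulVec, Matrix.smul_mulVec, Matrix.one_mulVec] at hp
    simp only [Pi.sub_apply, Pi.smul_apply, smul_eq_mul] at hp
    linarith
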